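/- The full KS map on cotangent vectors is invariant under the simultaneous S¹-action: for nonzero quaternion q, quaternion p, and angle β, setting q_β = (cos β - k sin β) q and p_β = (cos β - k sin β) p, one has q_β* k p_β / (2 q_β* q_β) = q* k p / (2 q* q). -/

import Mathlib

open Quaternion

noncomputable def quatK : Quaternion ℝ := ⟨0, 0, 0, 1⟩

/-- The full KS map on cotangent vectors is invariant under the
simultaneous S¹-action: for q ≠ 0, any p, and any β, with
q_β = (cos β - k sin β) q, p_β = (cos β - k sin β) p, one has
q_β* k p_β / (2 q_β* q_β) = q* k p / (2 q* q). -/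
theorem ks_full_s1_invariance (q p : Quaternion ℝ) (hq : q ≠ 0) (β : ℝ)
    (qβ pβ : Quaternion ℝ)
    (hqβ : qβ = ((Real.cos β : Quaternion ℝ) - Real.sin β • quatK) * q)
    (hpβ : pβ = ((Real.cos β : Quaternion ℝ) - Real.sin β • quatK) * p) :
    star qβ * quatK * pβ / (2 * (star qβ * qβ))
      = star q * quatK * p / (2 * (star q * q)) := by
  have h := Real.sin_sq_add_cos_sq β
  set u : Quaternion ℝ := (Real.cos β : Quaternion ℝ) - Real.sin β • quatK with hu
  have hu1 : star u * u = 1 := by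
    ext <;> simp [hu, show quatK.re = 0 from rfl, show quatK.imI = 0 from rfl, show quatK.imJ = 0 from rfl, show quatK.imK = 1 from rfl] <;> ring_nf <;> nlinarith [h]
  have hcomm : quatK * u = u * quatK := by
    ext <;> simp [hu, show quatK.re = 0 from rfl, show quatK.imI = 0 from rfl, show quatK.imJ = 0 from rfl, show quatK.imK = 1 from rfl]
  have h1 : star qβ * qβ = star q * q := by
    rw [hqβ, star_mul]
    calc star q * star u * (u * q) = star q * (star u * u) * q := by noncomm_ring
    _ = star q * q := by rw [hu1]; noncomm_ring
  have h2 : star qβ * quatK * pβ = star q * quatK * p := by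
    rw [hqβ, hpβ, star_mul]
    calc star q * star u * quatK * (u * p) = star q * star u * (quatK * u) * p := by noncomm_ring
    _ = star q * (star u * u) * quatK * p := by rw [hcomm]; noncomm_ring
    _ = star q * quatK * p := by rw [hu1]; noncomm_ring
  rw [h1, h2]
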